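/- Let f : ℝ × ℝ³ × ℝ³ → ℝ be a rapidly decaying (in c) nonnegative measurable function, m > 0, and define for indices k₁,…,k_M ∈ {0,1,2,3} the moments F_{k₁⋯k_M}(t,x) := ∫_{ℝ³} m ĉ_{k₁}⋯ĉ_{k_M} f(t,x,c) dc, where ĉ := (1, c) ∈ ℝ⁴. Let Y(t*, x*) = (t* + a, Q(t*)x* + b(t*)) be a Galilean-type transformation (Q(t*) ∈ SO(3), b smooth) with Jacobian DY = [[1, 0], [Ẋ, Q]], and let f*(t*, x*, c*) := f(t, x, c) under (t, x, c) = (t*+a, Q x* + b, Ẋ + Q c*) where Ẋ(t*,x*) = Q̇(t*)x* + ḃ(t*). Define F* from f* analogously. Then F_{k₁⋯k_M}(Y(t*,x*)) = Σ_{\bar k₁,…,\bar k_M} (DY)_{k₁\bar k₁} ⋯ (DY)_{k_M\bar k_M} F*_{\bar k₁⋯\bar k_M}(t*, x*), i.e. the moment hierarchy transforms as a contravariant M-tensor. -/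

import Mathlib

open Matrix MeasureTheory

lemma auxT (R : Matrix (Fin 3) (Fin 3) ℝ) (hR : Rᵀ * R = 1) (hdet : R.det = 1)
    (w : Fin 3 → ℝ) :
    MeasurePreserving (fun c : Fin 3 → ℝ => w + R.mulVec c) volume volume ∧
      MeasurableEmbedding (fun c : Fin 3 → ℝ => w + R.mulVec c) := by
  have hRR : R * Rᵀ = 1 := mul_eq_one_comm.mp hR
  have hcont : Continuous fun c : Fin 3 → ℝ => R.mulVec c := by
    have := LinearMap.continuous_on_pi (Matrix.toLin' R)
    exact this
  have hcont' : Continuous fun c : Fin 3 → ℝ => Rᵀ.mulVec c := by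
    have := LinearMap.continuous_on_pi (Matrix.toLin' Rᵀ)
    exact this
  have hmap : Measure.map (fun c : Fin 3 → ℝ => R.mulVec c) volume = volume := by
    have hfun : (fun c : Fin 3 → ℝ => R.mulVec c) = ⇑(Matrix.toLin' R) := by
      funext c; rw [Matrix.toLin'_apply]
    have hd : LinearMap.det (Matrix.toLin' R) ≠ 0 := by
      rw [LinearMap.det_toLin']; rw [hdet]; norm_num
    rw [hfun, Real.map_linearMap_volume_pi_eq_smul_volume_pi hd, LinearMap.det_toLin',
      hdet]
    simp
  have mpL : MeasurePreserving (fun c : Fin 3 → ℝ => R.mulVec c) volume volume :=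
    ⟨hcont.measurable, hmap⟩
  have mpA : MeasurePreserving (fun x : Fin 3 → ℝ => w + x) volume volume :=
    measurePreserving_add_left volume w
  have mpT : MeasurePreserving (fun c : Fin 3 → ℝ => w + R.mulVec c) volume volume :=
    mpA.comp mpL
  refine ⟨mpT, ?_⟩
  let E : (Fin 3 → ℝ) ≃ᵐ (Fin 3 → ℝ) :=
    { toFun := fun c => w + R.mulVec c
      invFun := fun c => Rᵀ.mulVec (c - w)
      left_inv := fun c => by
        simp [Matrix.mulVec_mulVec, hR, Matrix.one_mulVec]
      right_inv := fun c => by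
        simp [Matrix.mulVec_mulVec, hRR, Matrix.one_mulVec]
      measurable_toFun := (continuous_const.add hcont).measurable
      measurable_invFun :=
        (hcont'.comp (continuous_id.sub continuous_const)).measurable }
  exact E.measurableEmbedding

lemma auxChat (w : Fin 3 → ℝ) (A : Matrix (Fin 3) (Fin 3) ℝ)
    (N : Matrix (Fin 1 ⊕ Fin 3) (Fin 1 ⊕ Fin 3) ℝ)
    (hN : N = fromBlocks (of fun _ _ => 1) 0 (of fun i _ => w i) A)
    (c : Fin 3 → ℝ) (j : Fin 1 ⊕ Fin 3) :
    Sum.elim (fun _ => (1 : ℝ)) (w + A.mulVec c) j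
      = ∑ l, N j l * Sum.elim (fun _ => (1 : ℝ)) c l := by
  subst hN
  cases j with
  | inl j => simp [Fintype.sum_sum_type]
  | inr i => simp [Fintype.sum_sum_type, Matrix.mulVec, dotProduct]

lemma auxProd {M : ℕ} (N : Matrix (Fin 1 ⊕ Fin 3) (Fin 1 ⊕ Fin 3) ℝ)
    (g : (Fin 1 ⊕ Fin 3) → ℝ) (k : Fin M → (Fin 1 ⊕ Fin 3)) :
    ∏ i, ∑ l, N (k i) l * g l
      = ∑ kb : Fin M → (Fin 1 ⊕ Fin 3), (∏ i, N (k i) (kb i)) * ∏ i, g (kb i) := by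
  rw [Fintype.prod_sum]
  exact Finset.sum_congr rfl fun kb _ => by rw [Finset.prod_mul_distrib]

theorem stmt19 (f : ℝ × (Fin 3 → ℝ) × (Fin 3 → ℝ) → ℝ)
    (hfmeas : Measurable f) (hfnonneg : ∀ p, 0 ≤ f p)
    (m : ℝ) (hm : 0 < m) (M : ℕ)
    (chat : (Fin 3 → ℝ) → (Fin 1 ⊕ Fin 3) → ℝ)
    (hchat : ∀ c, chat c = Sum.elim (fun _ => (1 : ℝ)) c)
    (a : ℝ) (Q : ℝ → Matrix (Fin 3) (Fin 3) ℝ)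
    (hQorth : ∀ t, (Q t)ᵀ * Q t = 1) (hQdet : ∀ t, (Q t).det = 1)
    (hQdiff : ∀ i j, Differentiable ℝ (fun t => Q t i j))
    (b : ℝ → (Fin 3 → ℝ)) (hb : Differentiable ℝ b)
    (Xdot : ℝ → (Fin 3 → ℝ) → (Fin 3 → ℝ))
    (hXdot : ∀ t x, Xdot t x
      = (of fun i j => deriv (fun s => Q s i j) t).mulVec x + deriv b t)
    (DY : ℝ → (Fin 3 → ℝ) → Matrix (Fin 1 ⊕ Fin 3) (Fin 1 ⊕ Fin 3) ℝ)
    (hDY : ∀ t x, DY t x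
      = fromBlocks (of fun _ _ => 1) 0 (of fun i _ => Xdot t x i) (Q t))
    (fstar : ℝ × (Fin 3 → ℝ) × (Fin 3 → ℝ) → ℝ)
    (hfstar : ∀ t x c, fstar (t, x, c)
      = f (t + a, (Q t).mulVec x + b t, Xdot t x + (Q t).mulVec c))
    (hInt : ∀ (t : ℝ) (x : Fin 3 → ℝ) (k : Fin M → (Fin 1 ⊕ Fin 3)),
      Integrable (fun c : Fin 3 → ℝ => m * (∏ i, chat c (k i)) * f (t, x, c)))
    (F Fstar : (Fin M → (Fin 1 ⊕ Fin 3)) → ℝ → (Fin 3 → ℝ) → ℝ)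
    (hF : ∀ k t x, F k t x = ∫ c : Fin 3 → ℝ, m * (∏ i, chat c (k i)) * f (t, x, c))
    (hFstar : ∀ k t x, Fstar k t x
      = ∫ c : Fin 3 → ℝ, m * (∏ i, chat c (k i)) * fstar (t, x, c)) :
    ∀ (k : Fin M → (Fin 1 ⊕ Fin 3)) (tstar : ℝ) (xstar : Fin 3 → ℝ),
      F k (tstar + a) ((Q tstar).mulVec xstar + b tstar)
      = ∑ kb : Fin M → (Fin 1 ⊕ Fin 3),
          (∏ i, DY tstar xstar (k i) (kb i)) * Fstar kb tstar xstar := by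
  intro k tstar xstar
  have hR : (Q tstar)ᵀ * Q tstar = 1 := hQorth tstar
  have hRR : Q tstar * (Q tstar)ᵀ = 1 := mul_eq_one_comm.mp hR
  obtain ⟨mpT, embT⟩ := auxT (Q tstar) hR (hQdet tstar) (Xdot tstar xstar)
  have hRT : ((Q tstar)ᵀ)ᵀ * (Q tstar)ᵀ = 1 := by
    rw [Matrix.transpose_transpose]; exact hRR
  have hdT : ((Q tstar)ᵀ).det = 1 := by rw [Matrix.det_transpose]; exact hQdet tstar
  obtain ⟨mpS, embS⟩ :=
    auxT (Q tstar)ᵀ hRT hdT (-((Q tstar)ᵀ.mulVec (Xdot tstar xstar)))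
  set B : Matrix (Fin 1 ⊕ Fin 3) (Fin 1 ⊕ Fin 3) ℝ :=
    fromBlocks (of fun _ _ => (1 : ℝ)) 0
      (of fun i _ => (-((Q tstar)ᵀ.mulVec (Xdot tstar xstar))) i) (Q tstar)ᵀ with hB
  -- pointwise chat identities
  have hprodT : ∀ c : Fin 3 → ℝ,
      (∏ i, chat (Xdot tstar xstar + (Q tstar).mulVec c) (k i))
        = ∑ kb : Fin M → (Fin 1 ⊕ Fin 3),
            (∏ i, DY tstar xstar (k i) (kb i)) * ∏ i, chat c (kb i) := by
    intro c
    have h1 : ∀ j, chat (Xdot tstar xstar + (Q tstar).mulVec c) j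
        = ∑ l, DY tstar xstar j l * chat c l := by
      intro j
      simp only [hchat]
      exact auxChat _ _ _ (hDY tstar xstar) c j
    simp_rw [h1]
    exact auxProd _ _ k
  have hprodS : ∀ (kb : Fin M → (Fin 1 ⊕ Fin 3)) (c : Fin 3 → ℝ),
      (∏ i, chat (-((Q tstar)ᵀ.mulVec (Xdot tstar xstar)) + (Q tstar)ᵀ.mulVec c) (kb i))
        = ∑ k' : Fin M → (Fin 1 ⊕ Fin 3),
            (∏ i, B (kb i) (k' i)) * ∏ i, chat c (k' i) := by
    intro kb c
    have h1 : ∀ j, chat (-((Q tstar)ᵀ.mulVec (Xdot tstar xstar)) + (Q tstar)ᵀ.mulVec c) j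
        = ∑ l, B j l * chat c l := by
      intro j
      simp only [hchat]
      exact auxChat _ _ _ hB c j
    simp_rw [h1]
    exact auxProd _ _ kb
  have hST : ∀ c : Fin 3 → ℝ,
      -((Q tstar)ᵀ.mulVec (Xdot tstar xstar))
        + (Q tstar)ᵀ.mulVec (Xdot tstar xstar + (Q tstar).mulVec c) = c := by
    intro c
    simp [Matrix.mulVec_add, Matrix.mulVec_mulVec, hR, Matrix.one_mulVec,
      neg_add_cancel_left]
  -- integrability of each term
  have hIkb : ∀ kb : Fin M → (Fin 1 ⊕ Fin 3),
      Integrable (fun c : Fin 3 → ℝ =>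
        m * (∏ i, chat c (kb i)) * fstar (tstar, xstar, c)) := by
    intro kb
    have hH : Integrable (fun c : Fin 3 → ℝ =>
        m * (∏ i, chat (-((Q tstar)ᵀ.mulVec (Xdot tstar xstar)) + (Q tstar)ᵀ.mulVec c) (kb i))
          * f (tstar + a, (Q tstar).mulVec xstar + b tstar, c)) := by
      have heq : (fun c : Fin 3 → ℝ =>
          m * (∏ i, chat (-((Q tstar)ᵀ.mulVec (Xdot tstar xstar)) + (Q tstar)ᵀ.mulVec c) (kb i))
            * f (tstar + a, (Q tstar).mulVec xstar + b tstar, c))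
          = fun c => ∑ k' : Fin M → (Fin 1 ⊕ Fin 3),
              (∏ i, B (kb i) (k' i))
                * (m * (∏ i, chat c (k' i))
                  * f (tstar + a, (Q tstar).mulVec xstar + b tstar, c)) := by
        funext c
        rw [hprodS kb c, Finset.mul_sum, Finset.sum_mul]
        exact Finset.sum_congr rfl fun k' _ => by ring
      rw [heq]
      exact integrable_finset_sum _ fun k' _ =>
        (hInt (tstar + a) ((Q tstar).mulVec xstar + b tstar) k').const_mul _
    have hcomp : (fun c : Fin 3 → ℝ =>
        m * (∏ i, chat c (kb i)) * fstar (tstar, xstar, c))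
        = (fun c : Fin 3 → ℝ =>
            m * (∏ i, chat (-((Q tstar)ᵀ.mulVec (Xdot tstar xstar)) + (Q tstar)ᵀ.mulVec c) (kb i))
              * f (tstar + a, (Q tstar).mulVec xstar + b tstar, c))
          ∘ (fun c => Xdot tstar xstar + (Q tstar).mulVec c) := by
      funext c
      simp only [Function.comp_apply, hST c, hfstar]
    rw [hcomp]
    exact (mpT.integrable_comp_emb embT).mpr hH
  -- main computation
  rw [hF]
  have step1 : (∫ c : Fin 3 → ℝ, m * (∏ i, chat c (k i))
        * f (tstar + a, (Q tstar).mulVec xstar + b tstar, c))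
      = ∫ c : Fin 3 → ℝ,
          m * (∏ i, chat (Xdot tstar xstar + (Q tstar).mulVec c) (k i))
            * f (tstar + a, (Q tstar).mulVec xstar + b tstar,
                Xdot tstar xstar + (Q tstar).mulVec c) :=
    (mpT.integral_comp embT fun c => m * (∏ i, chat c (k i))
        * f (tstar + a, (Q tstar).mulVec xstar + b tstar, c)).symm
  rw [step1]
  have key : ∀ c : Fin 3 → ℝ,
      m * (∏ i, chat (Xdot tstar xstar + (Q tstar).mulVec c) (k i))
          * f (tstar + a, (Q tstar).mulVec xstar + b tstar,
              Xdot tstar xstar + (Q tstar).mulVec c)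
        = ∑ kb : Fin M → (Fin 1 ⊕ Fin 3),
            (∏ i, DY tstar xstar (k i) (kb i))
              * (m * (∏ i, chat c (kb i)) * fstar (tstar, xstar, c)) := by
    intro c
    rw [hfstar, hprodT c, Finset.mul_sum, Finset.sum_mul]
    exact Finset.sum_congr rfl fun kb _ => by ring
  simp_rw [key]
  rw [integral_finset_sum _ fun kb _ => (hIkb kb).const_mul _]
  refine Finset.sum_congr rfl fun kb _ => ?_
  rw [integral_const_mul, hFstar]
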